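/- Let G = (V,E,μ,ω) be a weighted graph with p ∈ V and Deg(x) ≤ D·d(x,p)^α for all x ≠ p, with D > 0 and 0 ≤ α ≤ 2. Let T ∈ (0,∞] and suppose u, v : (−T,T) × V → ℝ are solutions of the wave equation ∂_t² w = Δw + f with the same inhomogeneity f, same initial values u(0,·) = v(0,·) = g and ∂_t u(0,·) = ∂_t v(0,·) = h, and both satisfy the growth bound |w(t,x)| ≤ C·d(x,p)^{(2−α)·d(x,p)} for all t ∈ (−T,T), x ≠ p (with possibly different constants C). Then u ≡ v on (−T,T) × V. -/

import Mathlib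

open Real Set Filter



noncomputable def graphLap {V : Type*} (G : SimpleGraph V) [∀ v, Fintype (G.neighborSet v)]
    (ω : V → V → ℝ) (μ : V → ℝ) (f : V → ℝ) (x : V) : ℝ :=
  ∑ y ∈ G.neighborFinset x, ω x y / μ x * (f y - f x)

noncomputable def wDeg {V : Type*} (G : SimpleGraph V) [∀ v, Fintype (G.neighborSet v)]
    (ω : V → V → ℝ) (μ : V → ℝ) (x : V) : ℝ :=
  ∑ y ∈ G.neighborFinset x, ω x y / μ x


private lemma WUC_step {S : Set ℝ} (hconv : Convex ℝ S)
    {φ φ' : ℝ → ℝ} (hd : ∀ s ∈ S, HasDerivAt φ (φ' s) s) (hφ0 : φ 0 = 0)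
    {c : ℝ} {m : ℕ} {t : ℝ} (h0S : (0:ℝ) ∈ S) (ht : t ∈ S) (ht0 : 0 ≤ t)
    (hc : 0 ≤ c)
    (hb : ∀ s, s ∈ S → 0 ≤ s → s ≤ t → |φ' s| ≤ c * s ^ m / (m.factorial : ℝ)) :
    |φ t| ≤ c * t ^ (m + 1) / ((m+1).factorial : ℝ) := by
  have hIcc : Set.Icc (0:ℝ) t ⊆ S := hconv.ordConnected.out h0S ht
  have hfacpos : (0:ℝ) < ((m+1).factorial : ℝ) := by exact_mod_cast Nat.factorial_pos (m+1)
  have hfac : ((m+1).factorial : ℝ) = ((m:ℝ)+1) * (m.factorial : ℝ) := by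
    rw [Nat.factorial_succ]; push_cast; ring
  have hP : ∀ s : ℝ, HasDerivAt (fun z : ℝ => c * z ^ (m+1) / ((m+1).factorial : ℝ))
      (c * s ^ m / (m.factorial : ℝ)) s := by
    intro s
    have h1 : HasDerivAt (fun z : ℝ => z ^ (m+1)) (((m:ℝ)+1) * s ^ m) s := by
      simpa using hasDerivAt_pow (m+1) s
    have h2 := h1.const_mul (c / ((m+1).factorial : ℝ))
    have heq : (fun z : ℝ => c * z ^ (m+1) / ((m+1).factorial : ℝ))
        = fun z : ℝ => (c / ((m+1).factorial : ℝ)) * z ^ (m+1) := by funext z; ring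
    rw [heq]
    refine h2.congr_deriv ?_
    have hm : (m.factorial : ℝ) ≠ 0 := by positivity
    rw [hfac]
    field_simp
  have mono : ∀ ε : ℝ, ε = 1 ∨ ε = -1 → ε * φ t ≤ c * t ^ (m+1) / ((m+1).factorial : ℝ) := by
    intro ε hε
    set ψ : ℝ → ℝ := fun z => c * z ^ (m+1) / ((m+1).factorial : ℝ) - ε * φ z with hψdef
    have hψd : ∀ s ∈ S, HasDerivAt ψ (c * s ^ m / (m.factorial : ℝ) - ε * φ' s) s := by
      intro s hs
      exact (hP s).sub ((hd s hs).const_mul ε)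
    have hmono : MonotoneOn ψ (Set.Icc 0 t) := by
      apply monotoneOn_of_deriv_nonneg (convex_Icc 0 t)
      · intro s hs
        exact ((hψd s (hIcc hs)).continuousAt).continuousWithinAt
      · intro s hs
        rw [interior_Icc] at hs
        exact ((hψd s (hIcc (Set.Ioo_subset_Icc_self hs))).differentiableAt).differentiableWithinAt
      · intro s hs
        rw [interior_Icc] at hs
        have hsS : s ∈ S := hIcc (Set.Ioo_subset_Icc_self hs)
        rw [(hψd s hsS).deriv]
        have hbb := hb s hsS hs.1.le hs.2.le
        have hεφ : ε * φ' s ≤ |φ' s| := by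
          rcases hε with h | h <;> rw [h]
          · simpa using le_abs_self (φ' s)
          · simpa using neg_le_abs (φ' s)
        linarith
    have h0t : (0:ℝ) ∈ Set.Icc (0:ℝ) t := ⟨le_refl _, ht0⟩
    have htt : t ∈ Set.Icc (0:ℝ) t := ⟨ht0, le_refl _⟩
    have hψ0 : ψ 0 = 0 := by simp [hψdef, hφ0]
    have := hmono h0t htt ht0
    rw [hψ0] at this
    simp only [hψdef] at this
    linarith
  have h1 := mono 1 (Or.inl rfl)
  have h2 := mono (-1) (Or.inr rfl)
  rw [abs_le]
  constructor <;> linarith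

private lemma WUC_add_pow_le {a : ℝ} (ha : 0 ≤ a) (n : ℕ) :
    ((n:ℝ) + a) ^ n ≤ (n:ℝ) ^ n * Real.exp a := by
  rcases Nat.eq_zero_or_pos n with hn | hn
  · subst hn; simpa using Real.one_le_exp ha
  have hn0 : (0:ℝ) < n := by exact_mod_cast hn
  have h1 : (n:ℝ) + a = (n:ℝ) * (1 + a / n) := by field_simp
  have h2 : (1 + a / n : ℝ) ≤ Real.exp (a / n) := by
    have := Real.add_one_le_exp (a / n)
    linarith
  calc ((n:ℝ) + a) ^ n = (n:ℝ) ^ n * (1 + a / n) ^ n := by rw [h1, mul_pow]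
    _ ≤ (n:ℝ) ^ n * (Real.exp (a / n)) ^ n := by
        have h3 : (0:ℝ) ≤ 1 + a / n := by positivity
        exact mul_le_mul_of_nonneg_left (pow_le_pow_left₀ h3 h2 n) (by positivity)
    _ = (n:ℝ) ^ n * Real.exp a := by
        rw [← Real.exp_nat_mul]
        congr 1
        field_simp
    _ ≤ (n:ℝ) ^ n * Real.exp a := le_refl _

private lemma WUC_pow_le_fac_mul_exp : ∀ n : ℕ, (n:ℝ) ^ n ≤ (n.factorial : ℝ) * Real.exp n := by
  intro n
  induction n with
  | zero => simp
  | succ n ih =>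
    have h1 : ((n:ℝ) + 1) ^ n ≤ (n:ℝ) ^ n * Real.exp 1 := by
      simpa [add_comm] using WUC_add_pow_le (le_refl 0 |>.trans zero_le_one) n
    have h2 : ((n+1:ℕ):ℝ) ^ (n+1) = ((n:ℝ)+1) * ((n:ℝ)+1) ^ n := by push_cast; ring
    have hfac : ((n+1).factorial : ℝ) = ((n:ℝ)+1) * (n.factorial : ℝ) := by rw [Nat.factorial_succ]; push_cast; ring
    have hexp : Real.exp ((n:ℝ)+1) = Real.exp n * Real.exp 1 := by rw [← Real.exp_add]
    have hn1 : (0:ℝ) ≤ (n:ℝ)+1 := by positivity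
    calc ((n+1:ℕ):ℝ) ^ (n+1) = ((n:ℝ)+1) * ((n:ℝ)+1) ^ n := h2
      _ ≤ ((n:ℝ)+1) * ((n:ℝ) ^ n * Real.exp 1) := mul_le_mul_of_nonneg_left h1 hn1
      _ ≤ ((n:ℝ)+1) * (((n.factorial : ℝ) * Real.exp n) * Real.exp 1) := by
          apply mul_le_mul_of_nonneg_left _ hn1
          exact mul_le_mul_of_nonneg_right ih (Real.exp_pos 1).le
      _ = ((n+1).factorial : ℝ) * Real.exp ((n+1:ℕ):ℝ) := by rw [hfac]; push_cast [hexp]; ring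


private lemma WUC_lap_deriv {V : Type*} (G : SimpleGraph V) [∀ v, Fintype (G.neighborSet v)]
    (ω : V → V → ℝ) (μ : V → ℝ) (F : ℝ → V → ℝ) (F' : V → ℝ) (t : ℝ) (x : V)
    (h : ∀ y, HasDerivAt (fun s => F s y) (F' y) t) :
    HasDerivAt (fun s => graphLap G ω μ (F s) x) (graphLap G ω μ F' x) t := by
  simp only [graphLap]
  exact HasDerivAt.fun_sum fun y _ => ((h y).sub (h x)).const_mul _

private lemma WUC_lap_zero {V : Type*} (G : SimpleGraph V) [∀ v, Fintype (G.neighborSet v)]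
    (ω : V → V → ℝ) (μ : V → ℝ) :
    graphLap G ω μ (fun _ => (0:ℝ)) = fun _ => 0 := by
  funext x; simp [graphLap]

private lemma WUC_rpow_mono {a b e1 e2 : ℝ} (ha : 1 ≤ a) (hab : a ≤ b) (he1 : 0 ≤ e1)
    (he : e1 ≤ e2) : a ^ e1 ≤ b ^ e2 :=
  le_trans (Real.rpow_le_rpow (by linarith) hab he1)
    (Real.rpow_le_rpow_of_exponent_le (by linarith) he)

private lemma WUC_spatial_rpow {V : Type*} (G : SimpleGraph V) [∀ v, Fintype (G.neighborSet v)]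
    (hconn : G.Connected) (ω : V → V → ℝ) (μ : V → ℝ)
    (hμ : ∀ x, 0 < μ x) (hω : ∀ x y, G.Adj x y → 0 < ω x y)
    (p : V) (D α : ℝ) (hα0 : 0 ≤ α) (hα2 : α ≤ 2)
    (hdeg : ∀ x : V, x ≠ p → wDeg G ω μ x ≤ D * (G.dist x p : ℝ) ^ α)
    (K : ℝ) (hKD : D ≤ K) (hK1 : 1 ≤ K) (hKp : wDeg G ω μ p ≤ K)
    (C : ℝ) (hC : 0 ≤ C) (f : V → ℝ)
    (hf : ∀ y, |f y| ≤ C * (G.dist y p : ℝ) ^ ((2 - α) * (G.dist y p : ℝ)))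
    (n : ℕ) (x : V) :
    |(graphLap G ω μ)^[n] f x| ≤
      C * (2*K)^n * ((G.dist x p : ℝ) + n + 1) ^ (α * n + (2 - α) * ((G.dist x p : ℝ) + n + 1)) := by
  induction n generalizing x with
  | zero =>
    simp only [Function.iterate_zero_apply, pow_zero, mul_one, Nat.cast_zero, mul_zero, zero_add]
    rcases eq_or_ne x p with hx | hx
    · subst hx
      simp only [SimpleGraph.dist_self, Nat.cast_zero, zero_add, Real.one_rpow]
      have := hf x
      simpa [SimpleGraph.dist_self] using this
    · have hd1 : 1 ≤ (G.dist x p : ℝ) := by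
        exact_mod_cast hconn.pos_dist_of_ne hx
      refine (hf x).trans ?_
      apply mul_le_mul_of_nonneg_left _ hC
      exact WUC_rpow_mono hd1 (by linarith) (by nlinarith) (by nlinarith)
  | succ n ih =>
    rw [Function.iterate_succ_apply']
    set F := (graphLap G ω μ)^[n] f with hF
    set d : ℝ := (G.dist x p : ℝ) with hd
    have hd0 : 0 ≤ d := by positivity
    set Ψ : ℝ := d + (n+1) + 1 with hΨ
    have hcastΨ : d + ((n+1 : ℕ) : ℝ) + 1 = Ψ := by rw [hΨ]; push_cast; ring
    have hΨ1 : (1:ℝ) ≤ Ψ := by rw [hΨ]; push_cast; linarith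
    have hΨ0 : (0:ℝ) < Ψ := by linarith
    set M : ℝ := C * (2*K)^n * Ψ ^ (α * n + (2 - α) * Ψ) with hM
    have hM0 : 0 ≤ M := by
      apply mul_nonneg (mul_nonneg hC (by positivity))
      exact Real.rpow_nonneg (by linarith) _
    have hbd : ∀ y : V, (G.dist y p : ℝ) ≤ d + 1 → |F y| ≤ M := by
      intro y hy
      refine (ih y).trans ?_
      apply mul_le_mul_of_nonneg_left _ (mul_nonneg hC (by positivity))
      have h1 : (1:ℝ) ≤ (G.dist y p : ℝ) + n + 1 := by
        have : (0:ℝ) ≤ (G.dist y p : ℝ) := by positivity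
        linarith
      apply WUC_rpow_mono h1 _ _ _
      · rw [hΨ]; push_cast; linarith
      · have : (0:ℝ) ≤ (G.dist y p : ℝ) := by positivity
        nlinarith
      · have : (G.dist y p : ℝ) + n + 1 ≤ Ψ := by rw [hΨ]; push_cast; linarith
        nlinarith
    have hFx : |F x| ≤ M := hbd x (by linarith)
    have hFy : ∀ y ∈ G.neighborFinset x, |F y| ≤ M := by
      intro y hy
      rw [SimpleGraph.mem_neighborFinset] at hy
      apply hbd
      have h2 : G.dist y x ≤ 1 := by
        have := SimpleGraph.dist_le (SimpleGraph.Walk.cons hy.symm SimpleGraph.Walk.nil)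
        simpa using this
      have h1 := hconn.dist_triangle (u := y) (v := x) (w := p)
      have : G.dist y p ≤ G.dist x p + 1 := by omega
      rw [hd]
      exact_mod_cast this
    have hcpos : ∀ y : V, G.Adj x y → 0 ≤ ω x y / μ x := by
      intro y hy
      exact le_of_lt (div_pos (hω x y hy) (hμ x))
    have step1 : |graphLap G ω μ F x| ≤ wDeg G ω μ x * (2 * M) := by
      simp only [graphLap]
      refine (Finset.abs_sum_le_sum_abs _ _).trans ?_
      rw [wDeg, Finset.sum_mul]
      apply Finset.sum_le_sum
      intro y hy
      have hadj : G.Adj x y := (SimpleGraph.mem_neighborFinset _ _ _).1 hy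
      rw [abs_mul, abs_of_nonneg (hcpos y hadj)]
      apply mul_le_mul_of_nonneg_left _ (hcpos y hadj)
      calc |F y - F x| ≤ |F y| + |F x| := abs_sub _ _
        _ ≤ M + M := add_le_add (hFy y hy) hFx
        _ = 2 * M := by ring
    have hdeg' : wDeg G ω μ x ≤ K * Ψ ^ α := by
      rcases eq_or_ne x p with hx | hx
      · subst hx
        refine hKp.trans ?_
        nth_rewrite 1 [← mul_one K]
        exact mul_le_mul_of_nonneg_left (Real.one_le_rpow hΨ1 hα0) (by linarith)
      · refine (hdeg x hx).trans ?_
        have h1 : (G.dist x p : ℝ) ^ α ≤ Ψ ^ α := by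
          apply Real.rpow_le_rpow hd0 _ hα0
          rw [hΨ]; push_cast; linarith
        calc D * (G.dist x p : ℝ) ^ α ≤ K * (G.dist x p : ℝ) ^ α := by
              apply mul_le_mul_of_nonneg_right hKD (Real.rpow_nonneg hd0 _)
          _ ≤ K * Ψ ^ α := mul_le_mul_of_nonneg_left h1 (by linarith)
    have hwdeg0 : 0 ≤ wDeg G ω μ x := by
      rw [wDeg]
      apply Finset.sum_nonneg
      intro y hy
      exact hcpos y ((SimpleGraph.mem_neighborFinset _ _ _).1 hy)
    calc |graphLap G ω μ F x| ≤ wDeg G ω μ x * (2 * M) := step1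
      _ ≤ (K * Ψ ^ α) * (2 * M) := by
          apply mul_le_mul_of_nonneg_right hdeg' (by linarith)
      _ = C * (2*K)^(n+1) * (Ψ ^ α * Ψ ^ (α * n + (2 - α) * Ψ)) := by
          rw [hM]; ring
      _ = C * (2*K)^(n+1) * Ψ ^ (α * (n+1) + (2 - α) * Ψ) := by
          rw [← Real.rpow_add hΨ0]
          congr 1
          congr 1
          ring
      _ = C * (2*K)^(n+1) * (d + ((n+1:ℕ):ℝ) + 1) ^ (α * ((n+1:ℕ):ℝ) + (2 - α) * (d + ((n+1:ℕ):ℝ) + 1)) := by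
          rw [hcastΨ]
          congr 2
          push_cast; ring

private lemma WUC_spatial {V : Type*} (G : SimpleGraph V) [∀ v, Fintype (G.neighborSet v)]
    (hconn : G.Connected) (ω : V → V → ℝ) (μ : V → ℝ)
    (hμ : ∀ x, 0 < μ x) (hω : ∀ x y, G.Adj x y → 0 < ω x y)
    (p : V) (D α : ℝ) (hα0 : 0 ≤ α) (hα2 : α ≤ 2)
    (hdeg : ∀ x : V, x ≠ p → wDeg G ω μ x ≤ D * (G.dist x p : ℝ) ^ α)
    (K : ℝ) (hKD : D ≤ K) (hK1 : 1 ≤ K) (hKp : wDeg G ω μ p ≤ K)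
    (C : ℝ) (hC : 0 ≤ C) (f : V → ℝ)
    (hf : ∀ y, |f y| ≤ C * (G.dist y p : ℝ) ^ ((2 - α) * (G.dist y p : ℝ)))
    (n : ℕ) (x : V) :
    |(graphLap G ω μ)^[n] f x| ≤
      C * (2*K)^n * ((G.dist x p : ℝ) + n + 1) ^ (2*n + 2*(G.dist x p) + 2) := by
  refine (WUC_spatial_rpow G hconn ω μ hμ hω p D α hα0 hα2 hdeg K hKD hK1 hKp C hC f hf n x).trans ?_
  apply mul_le_mul_of_nonneg_left _ (mul_nonneg hC (by positivity))
  set d : ℝ := (G.dist x p : ℝ) with hd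
  have hd0 : 0 ≤ d := by positivity
  have h1 : (1:ℝ) ≤ d + n + 1 := by
    have : (0:ℝ) ≤ (n:ℝ) := by positivity
    linarith
  have h2 : α * n + (2 - α) * (d + n + 1) ≤ ((2*n + 2*(G.dist x p) + 2 : ℕ) : ℝ) := by
    push_cast
    rw [← hd]
    nlinarith [mul_nonneg hα0 hd0, mul_nonneg hα0 (by positivity : (0:ℝ) ≤ (n:ℝ))]
  calc (d + n + 1) ^ (α * n + (2 - α) * (d + n + 1))
      ≤ (d + n + 1) ^ (((2*n + 2*(G.dist x p) + 2 : ℕ) : ℝ)) :=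
        Real.rpow_le_rpow_of_exponent_le h1 h2
    _ = (d + n + 1) ^ (2*n + 2*(G.dist x p) + 2) := Real.rpow_natCast _ _

private lemma WUC_small {V : Type*} (G : SimpleGraph V) [∀ v, Fintype (G.neighborSet v)]
    (ω : V → V → ℝ) (μ : V → ℝ) (p : V)
    {S : Set ℝ} (hconv : Convex ℝ S) (h0S : (0:ℝ) ∈ S)
    {C K : ℝ} (hC : 0 ≤ C) (hK1 : 1 ≤ K)
    (w w1 : ℝ → V → ℝ)
    (hd1 : ∀ x, ∀ t ∈ S, HasDerivAt (fun s => w s x) (w1 t x) t)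
    (hd2 : ∀ x, ∀ t ∈ S, HasDerivAt (fun s => w1 s x) (graphLap G ω μ (w t) x) t)
    (hw0 : ∀ x, w 0 x = 0) (hw10 : ∀ x, w1 0 x = 0)
    (hWB : ∀ t ∈ S, ∀ (n : ℕ) (x : V), |(graphLap G ω μ)^[n] (w t) x| ≤
      C * (2*K)^n * ((G.dist x p : ℝ) + n + 1) ^ (2*n + 2*(G.dist x p) + 2))
    {t : ℝ} (ht : t ∈ S) (ht0 : 0 ≤ t)
    (htQ : t ≤ 1 / (Real.exp 1 * Real.sqrt (2*K))) :
    ∀ x, w t x = 0 := by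
  have hK0 : (0:ℝ) < K := by linarith
  set L := graphLap G ω μ with hL
  have LN : ∀ n : ℕ, ∀ x : V,
      (∀ τ ∈ S, HasDerivAt (fun s => L^[n] (w s) x) (L^[n] (w1 τ) x) τ)
      ∧ (∀ τ ∈ S, HasDerivAt (fun s => L^[n] (w1 s) x) (L^[n+1] (w τ) x) τ) := by
    intro n
    induction n with
    | zero =>
      intro x
      refine ⟨fun τ hτ => by simpa using hd1 x τ hτ, fun τ hτ => by simpa using hd2 x τ hτ⟩
    | succ n ih =>
      intro x
      constructor
      · intro τ hτ
        have h := WUC_lap_deriv G ω μ (fun s => L^[n] (w s)) (L^[n] (w1 τ)) τ x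
          (fun y => (ih y).1 τ hτ)
        simpa [Function.iterate_succ_apply'] using h
      · intro τ hτ
        have h := WUC_lap_deriv G ω μ (fun s => L^[n] (w1 s)) (L^[n+1] (w τ)) τ x
          (fun y => (ih y).2 τ hτ)
        simpa [Function.iterate_succ_apply'] using h
  have hz : ∀ (n : ℕ) (x : V), L^[n] (w 0) x = 0 ∧ L^[n] (w1 0) x = 0 := by
    have hw0' : w 0 = fun _ => (0:ℝ) := funext hw0
    have hw10' : w1 0 = fun _ => (0:ℝ) := funext hw10
    intro n x
    rw [hw0', hw10', hL, Function.iterate_fixed (WUC_lap_zero G ω μ) n]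
    simp
  have Q : ∀ (n j k : ℕ), k + j = n → ∀ (x : V), ∀ τ ∈ S, 0 ≤ τ → τ ≤ t →
      |L^[k] (w τ) x| ≤ (C * (2*K)^n * ((G.dist x p : ℝ) + n + 1) ^ (2*n + 2*(G.dist x p) + 2))
        * τ ^ (2*j) / ((2*j).factorial : ℝ) := by
    intro n j
    induction j with
    | zero =>
      intro k hk x τ hτS hτ0 _
      have hkn : k = n := by omega
      subst hkn
      simpa using hWB τ hτS k x
    | succ j ihj =>
      intro k hk x τ hτS hτ0 hτt
      have hk1 : (k+1) + j = n := by omega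
      set B : ℝ := C * (2*K)^n * ((G.dist x p : ℝ) + n + 1) ^ (2*n + 2*(G.dist x p) + 2) with hB
      have hB0 : 0 ≤ B := by
        apply mul_nonneg (mul_nonneg hC (by positivity))
        positivity
      have hw1b : ∀ σ ∈ S, 0 ≤ σ → σ ≤ τ →
          |L^[k] (w1 σ) x| ≤ B * σ ^ (2*j+1) / ((2*j+1).factorial : ℝ) := by
        intro σ hσS hσ0 hστ
        have hstep := WUC_step (S := S) hconv (φ := fun s => L^[k] (w1 s) x)
          (φ' := fun s => L^[k+1] (w s) x) (fun s hs => (LN k x).2 s hs) (hz k x).2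
          h0S hσS hσ0 hB0
          (fun ρ hρ hρ0 hρσ => by
            have hq := ihj (k+1) hk1 x ρ hρ hρ0 (hρσ.trans (hστ.trans hτt))
            exact hq)
        exact hstep
      have hstep2 := WUC_step (S := S) hconv (φ := fun s => L^[k] (w s) x)
        (φ' := fun s => L^[k] (w1 s) x) (fun s hs => (LN k x).1 s hs) (hz k x).1
        h0S hτS hτ0 hB0
        (fun ρ hρ hρ0 hρτ => hw1b ρ hρ hρ0 hρτ)
      have hE : 2*j+1+1 = 2*(j+1) := by omega
      rw [← hE]
      exact hstep2
  intro x
  set dn : ℕ := G.dist x p with hdn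
  set d : ℝ := (dn : ℝ) with hdd
  have hd0 : (0:ℝ) ≤ d := by positivity
  have Qf : ∀ n : ℕ, |w t x| ≤
      C * (2*K)^n * (d + n + 1) ^ (2*n + 2*dn + 2) * t ^ (2*n) / ((2*n).factorial : ℝ) := by
    intro n
    have hq := Q n n 0 (by omega) x t ht ht0 le_rfl
    simpa using hq
  set kk : ℕ := 2*dn + 2 with hkk
  set Cbig : ℝ := C * Real.exp (2*d+2) * (d+2)^kk with hCbig
  have hCbig0 : 0 ≤ Cbig := by
    apply mul_nonneg (mul_nonneg hC (Real.exp_pos _).le)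
    positivity
  have main : ∀ n : ℕ, 1 ≤ n →
      |w t x| ≤ Cbig * ((n:ℝ)+1)^kk * ((1:ℝ)/4)^n := by
    intro n hn
    have hen1 : (1:ℝ) ≤ (n:ℝ) := by exact_mod_cast hn
    have hen0 : (0:ℝ) < (n:ℝ) := by linarith
    have hnpow : (0:ℝ) < (n:ℝ)^(2*n) := by positivity
    have hfacpos : (0:ℝ) < ((2*n).factorial : ℝ) := by
      exact_mod_cast Nat.factorial_pos (2*n)
    -- piecewise bounds
    have h1 : (d + (n:ℝ) + 1)^n ≤ (n:ℝ)^n * Real.exp (d+1) := by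
      have := WUC_add_pow_le (a := d + 1) (by linarith) n
      calc (d + (n:ℝ) + 1)^n = ((n:ℝ) + (d+1))^n := by ring_nf
        _ ≤ (n:ℝ)^n * Real.exp (d+1) := this
    have h2 : (d + (n:ℝ) + 1)^(2*n) ≤ (n:ℝ)^(2*n) * Real.exp (2*d+2) := by
      have hb0 : (0:ℝ) ≤ d + (n:ℝ) + 1 := by linarith
      calc (d + (n:ℝ) + 1)^(2*n) = ((d + (n:ℝ) + 1)^n)^2 := by
            rw [mul_comm 2 n, pow_mul]
        _ ≤ ((n:ℝ)^n * Real.exp (d+1))^2 := by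
            apply pow_le_pow_left₀ (by positivity) h1
        _ = (n:ℝ)^(2*n) * Real.exp (2*d+2) := by
            rw [mul_pow, ← pow_mul, mul_comm n 2, sq, ← Real.exp_add]
            ring_nf
    have h3 : (d + (n:ℝ) + 1)^kk ≤ (d+2)^kk * ((n:ℝ)+1)^kk := by
      rw [← mul_pow]
      apply pow_le_pow_left₀ (by linarith)
      nlinarith [mul_nonneg hd0 hen0.le]
    have h4 : ((2*n).factorial : ℝ)⁻¹ ≤ (Real.exp 2)^n / ((4:ℝ)^n * (n:ℝ)^(2*n)) := by
      have hid : ((4:ℝ)^n * (n:ℝ)^(2*n)) = (((2*n:ℕ)):ℝ)^(2*n) := by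
        push_cast
        rw [show (4:ℝ) = 2^2 by norm_num, ← pow_mul, mul_pow]
      have hple := WUC_pow_le_fac_mul_exp (2*n)
      have hexp2 : Real.exp (((2*n:ℕ)):ℝ) = (Real.exp 2)^n := by
        push_cast
        rw [show (2:ℝ)*(n:ℝ) = (n:ℝ)*2 by ring, Real.exp_nat_mul]
      rw [inv_eq_one_div, div_le_div_iff₀ hfacpos (by positivity)]
      rw [hid]
      calc 1 * (((2*n:ℕ)):ℝ)^(2*n) = (((2*n:ℕ)):ℝ)^(2*n) := by ring
        _ ≤ ((2*n).factorial : ℝ) * Real.exp (((2*n:ℕ)):ℝ) := hple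
        _ = (Real.exp 2)^n * ((2*n).factorial : ℝ) := by rw [hexp2]; ring
    have hr0 : (0:ℝ) ≤ 2*K*t^2*Real.exp 2/4 := by positivity
    have hr14 : 2*K*t^2*Real.exp 2/4 ≤ 1/4 := by
      have hsq : t^2 ≤ (1 / (Real.exp 1 * Real.sqrt (2*K)))^2 := by
        apply sq_le_sq' _ htQ
        have : (0:ℝ) < 1 / (Real.exp 1 * Real.sqrt (2*K)) := by positivity
        linarith
      have hsqrt : (Real.sqrt (2*K))^2 = 2*K := Real.sq_sqrt (by linarith)
      have hexp : (Real.exp 1)^2 = Real.exp 2 := by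
        rw [sq, ← Real.exp_add]; norm_num
      have hpos : (0:ℝ) < Real.exp 2 := Real.exp_pos 2
      have h2K : (0:ℝ) < 2*K := by linarith
      have hval : (1 / (Real.exp 1 * Real.sqrt (2*K)))^2 = 1 / (Real.exp 2 * (2*K)) := by
        rw [div_pow, mul_pow, hsqrt, hexp]
        norm_num
      rw [hval] at hsq
      rw [div_le_div_iff₀ (by norm_num) (by norm_num)]
      calc 2*K*t^2*Real.exp 2 * 4 ≤ 2*K*(1 / (Real.exp 2 * (2*K)))*Real.exp 2 * 4 := by
            have ht2 : (0:ℝ) ≤ t^2 := sq_nonneg t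
            nlinarith [mul_pos h2K hpos]
        _ = 4 := by field_simp
        _ = 1 * 4 := by ring
    -- main chain
    calc |w t x| ≤ C * (2*K)^n * (d + n + 1) ^ (2*n + 2*dn + 2) * t ^ (2*n) / ((2*n).factorial : ℝ) := Qf n
      _ = C * (2*K)^n * ((d + (n:ℝ) + 1) ^ (2*n) * (d + (n:ℝ) + 1) ^ kk) * t ^ (2*n)
            * ((2*n).factorial : ℝ)⁻¹ := by
          rw [div_eq_mul_inv, hkk, show 2*n + 2*dn + 2 = 2*n + (2*dn+2) from by ring, pow_add]
      _ ≤ C * (2*K)^n * (((n:ℝ)^(2*n) * Real.exp (2*d+2)) * ((d+2)^kk * ((n:ℝ)+1)^kk)) * t ^ (2*n)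
            * ((Real.exp 2)^n / ((4:ℝ)^n * (n:ℝ)^(2*n))) := by
          apply mul_le_mul
          · apply mul_le_mul_of_nonneg_right _ (by positivity)
            apply mul_le_mul_of_nonneg_left _ (by positivity)
            exact mul_le_mul h2 h3 (by positivity) (by positivity)
          · exact h4
          · positivity
          · positivity
      _ = (Cbig * ((n:ℝ)+1)^kk) * (2*K*t^2*Real.exp 2/4)^n * ((n:ℝ)^(2*n) / (n:ℝ)^(2*n)) := by
          rw [hCbig, div_pow, mul_pow, mul_pow, mul_pow, ← pow_mul]
          field_simp
          ring
      _ = (Cbig * ((n:ℝ)+1)^kk) * (2*K*t^2*Real.exp 2/4)^n := by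
          rw [div_self (ne_of_gt hnpow), mul_one]
      _ ≤ (Cbig * ((n:ℝ)+1)^kk) * ((1:ℝ)/4)^n := by
          apply mul_le_mul_of_nonneg_left _ (by positivity)
          exact pow_le_pow_left₀ hr0 hr14 n
      _ = Cbig * ((n:ℝ)+1)^kk * ((1:ℝ)/4)^n := by ring
  -- limit
  have hg : Filter.Tendsto (fun M : ℕ => ((M:ℝ))^kk * ((1:ℝ)/4)^M) Filter.atTop (nhds 0) :=
    (summable_pow_mul_geometric_of_norm_lt_one kk (r := ((1:ℝ)/4))
      (by rw [Real.norm_eq_abs, abs_of_pos (by norm_num : (0:ℝ) < 1/4)]; norm_num)).tendsto_atTop_zero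
  have hshift : Filter.Tendsto (fun n : ℕ => (((n+1:ℕ)):ℝ)^kk * ((1:ℝ)/4)^(n+1))
      Filter.atTop (nhds 0) := hg.comp (Filter.tendsto_add_atTop_nat 1)
  have hfin : Filter.Tendsto (fun n : ℕ => Cbig * ((n:ℝ)+1)^kk * ((1:ℝ)/4)^n)
      Filter.atTop (nhds 0) := by
    have h := hshift.const_mul (Cbig * 4)
    rw [mul_zero] at h
    convert h using 2 with n
    push_cast
    ring
  have habs : |w t x| ≤ 0 := by
    apply ge_of_tendsto hfin
    rw [Filter.eventually_atTop]
    exact ⟨1, fun n hn => main n hn⟩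
  exact abs_eq_zero.1 (le_antisymm habs (abs_nonneg _))

private lemma WUC_mid {V : Type*} (G : SimpleGraph V) [∀ v, Fintype (G.neighborSet v)]
    (ω : V → V → ℝ) (μ : V → ℝ) (p : V)
    {S : Set ℝ} (hconv : Convex ℝ S) (h0S : (0:ℝ) ∈ S)
    {C K : ℝ} (hC : 0 ≤ C) (hK1 : 1 ≤ K)
    (w w1 : ℝ → V → ℝ)
    (hd1 : ∀ x, ∀ t ∈ S, HasDerivAt (fun s => w s x) (w1 t x) t)
    (hd2 : ∀ x, ∀ t ∈ S, HasDerivAt (fun s => w1 s x) (graphLap G ω μ (w t) x) t)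
    (hw0 : ∀ x, w 0 x = 0) (hw10 : ∀ x, w1 0 x = 0)
    (hWB : ∀ t ∈ S, ∀ (n : ℕ) (x : V), |(graphLap G ω μ)^[n] (w t) x| ≤
      C * (2*K)^n * ((G.dist x p : ℝ) + n + 1) ^ (2*n + 2*(G.dist x p) + 2)) :
    ∀ t ∈ S, 0 ≤ t → ∀ x, w t x = 0 := by
  have h2K : (0:ℝ) < 2*K := by linarith
  have hsq : (0:ℝ) < Real.sqrt (2*K) := Real.sqrt_pos.2 h2K
  set tQ : ℝ := 1 / (Real.exp 1 * Real.sqrt (2*K)) with htQdef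
  have htQ0 : (0:ℝ) < tQ := by
    rw [htQdef]
    positivity
  have BOOT : ∀ k : ℕ, ∀ t ∈ S, 0 ≤ t → t ≤ k * tQ → ∀ x, w t x = 0 := by
    intro k
    induction k with
    | zero =>
      intro t htS ht0 htk x
      have ht : t = 0 := le_antisymm (by simpa using htk) ht0
      rw [ht]; exact hw0 x
    | succ k ih =>
      intro t htS ht0 htk x
      by_cases hcase : t ≤ k * tQ
      · exact ih t htS ht0 hcase x
      push_neg at hcase
      set τ0 : ℝ := k * tQ with hτ0def
      have hτ00 : 0 ≤ τ0 := by positivity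
      have hIcc : Set.Icc 0 t ⊆ S := hconv.ordConnected.out h0S htS
      have hτ0S : τ0 ∈ S := hIcc ⟨hτ00, hcase.le⟩
      have hwτ0 : ∀ y, w τ0 y = 0 := fun y => ih τ0 hτ0S hτ00 le_rfl y
      have hw1τ0 : ∀ y, w1 τ0 y = 0 := by
        intro y
        rcases Nat.eq_zero_or_pos k with hk | hk
        · have hz : τ0 = 0 := by rw [hτ0def, hk]; simp
          rw [hz]; exact hw10 y
        · have hk1 : (1:ℝ) ≤ (k:ℝ) := by exact_mod_cast hk
          have hτ0pos : 0 < τ0 := by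
            rw [hτ0def]; positivity
          have hzero : ∀ s ∈ Set.Icc (0:ℝ) τ0, w s y = 0 := by
            intro s hs
            exact ih s (hIcc ⟨hs.1, hs.2.trans hcase.le⟩) hs.1 hs.2 y
          have hder := (hd1 y τ0 hτ0S).hasDerivWithinAt (s := Set.Icc 0 τ0)
          have hder0 : HasDerivWithinAt (fun _ : ℝ => (0:ℝ)) (w1 τ0 y) (Set.Icc 0 τ0) τ0 := by
            apply hder.congr
            · intro s hs; exact (hzero s hs).symm
            · exact (hzero τ0 ⟨hτ00, le_rfl⟩).symm
          have huniq := uniqueDiffOn_Icc hτ0pos τ0 ⟨hτ00, le_rfl⟩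
          have h1 := hder0.derivWithin huniq
          have h2 := (hasDerivWithinAt_const τ0 (Set.Icc 0 τ0) (0:ℝ)).derivWithin huniq
          rw [h1] at h2
          exact h2
      set S' : Set ℝ := (fun s => τ0 + s) ⁻¹' S with hS'def
      have hS'conv : Convex ℝ S' := by
        have himg : S' = (fun z => -τ0 + z) '' S := by
          ext z
          constructor
          · intro hz
            exact ⟨τ0 + z, hz, by ring⟩
          · rintro ⟨y, hy, rfl⟩
            show τ0 + (-τ0 + y) ∈ S
            simpa [add_left_comm, add_assoc] using hy
        rw [himg]
        exact hconv.translate (-τ0)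
      have h0S' : (0:ℝ) ∈ S' := by
        show τ0 + 0 ∈ S
        simpa using hτ0S
      have hd1' : ∀ y, ∀ s ∈ S', HasDerivAt (fun z => w (τ0 + z) y) (w1 (τ0 + s) y) s := by
        intro y s hs
        have hshift : HasDerivAt (fun z : ℝ => τ0 + z) 1 s := by
          simpa using (hasDerivAt_id s).const_add τ0
        have h := (hd1 y (τ0 + s) hs).comp s hshift
        simpa [Function.comp_def] using h
      have hd2' : ∀ y, ∀ s ∈ S',
          HasDerivAt (fun z => w1 (τ0 + z) y) (graphLap G ω μ (w (τ0 + s)) y) s := by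
        intro y s hs
        have hshift : HasDerivAt (fun z : ℝ => τ0 + z) 1 s := by
          simpa using (hasDerivAt_id s).const_add τ0
        have h := (hd2 y (τ0 + s) hs).comp s hshift
        simpa [Function.comp_def] using h
      have hWB' : ∀ s ∈ S', ∀ (n : ℕ) (y : V), |(graphLap G ω μ)^[n] (w (τ0 + s)) y| ≤
          C * (2*K)^n * ((G.dist y p : ℝ) + n + 1) ^ (2*n + 2*(G.dist y p) + 2) :=
        fun s hs => hWB (τ0 + s) hs
      have hts' : t - τ0 ∈ S' := by
        show τ0 + (t - τ0) ∈ S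
        simpa using htS
      have hts0 : 0 ≤ t - τ0 := by linarith
      have htsQ : t - τ0 ≤ tQ := by
        have : t ≤ ((k+1:ℕ):ℝ) * tQ := htk
        push_cast at this
        nlinarith
      have hsmall := WUC_small G ω μ p hS'conv h0S' hC hK1
        (fun z y => w (τ0 + z) y) (fun z y => w1 (τ0 + z) y)
        hd1' hd2' (fun y => by simpa using hwτ0 y) (fun y => by simpa using hw1τ0 y)
        hWB' hts' hts0 htsQ x
      simpa using hsmall
  intro t htS ht0 x
  obtain ⟨k, hk⟩ := exists_nat_ge (t / tQ)
  have hkt : t ≤ k * tQ := by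
    rw [div_le_iff₀ htQ0] at hk
    linarith
  exact BOOT k t htS ht0 hkt x

private lemma WUC_lap_sub {V : Type*} (G : SimpleGraph V) [∀ v, Fintype (G.neighborSet v)]
    (ω : V → V → ℝ) (μ : V → ℝ) (F H : V → ℝ) (x : V) :
    graphLap G ω μ (fun y => F y - H y) x = graphLap G ω μ F x - graphLap G ω μ H x := by
  rw [graphLap, graphLap, graphLap, ← Finset.sum_sub_distrib]
  apply Finset.sum_congr rfl
  intros
  ring

private lemma WUC_iter2 {f : ℝ → ℝ} {S : Set ℝ} (hS : IsOpen S) {t : ℝ} (ht : t ∈ S) :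
    iteratedDerivWithin 2 f S t = deriv (deriv f) t := by
  have hu : UniqueDiffOn ℝ S := hS.uniqueDiffOn
  rw [iteratedDerivWithin_succ, derivWithin_of_isOpen hS ht]
  have hEq : iteratedDerivWithin 1 f S =ᶠ[nhds t] deriv f := by
    filter_upwards [hS.mem_nhds ht] with s hs
    rw [iteratedDerivWithin_one, derivWithin_of_isOpen hS hs]
  exact hEq.deriv_eq


/-- uniqueness class for the wave equation on graphs. Under
`Deg(x) ≤ D·d(x,p)^α`, two solutions `u, v` of `∂_t² w = Δw + f` on `(−T,T) × V`
(`T ∈ (0,∞]` encoded as `T : EReal`) with the same data `f, g, h` which both satisfy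
`|w(t,x)| ≤ C·d(x,p)^{(2−α)·d(x,p)}` (with possibly different constants, the bound
reading `C` at `x = p` since `0^0 = 1` for `Real.rpow`) coincide. -/
theorem wave_uniqueness_class {V : Type*} (G : SimpleGraph V)
    [∀ v, Fintype (G.neighborSet v)]
    (hconn : G.Connected)
    (ω : V → V → ℝ) (μ : V → ℝ)
    (hμ : ∀ x, 0 < μ x)
    (hω : ∀ x y, G.Adj x y → 0 < ω x y)
    (hsymm : ∀ x y, ω x y = ω y x)
    (p : V) (D α : ℝ) (hD : 0 < D) (hα0 : 0 ≤ α) (hα2 : α ≤ 2)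
    (hdeg : ∀ x : V, x ≠ p → wDeg G ω μ x ≤ D * (G.dist x p : ℝ) ^ α)
    (T : EReal) (hT : 0 < T)
    (f : ℝ → V → ℝ) (g h : V → ℝ)
    (u v : ℝ → V → ℝ)
    (hregu : ∀ x : V,
      ContDiffOn ℝ 2 (fun t => u t x) {t : ℝ | -T < (t : EReal) ∧ (t : EReal) < T})
    (hregv : ∀ x : V,
      ContDiffOn ℝ 2 (fun t => v t x) {t : ℝ | -T < (t : EReal) ∧ (t : EReal) < T})
    (hwaveu : ∀ t : ℝ, -T < (t : EReal) → (t : EReal) < T → ∀ x : V,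
      iteratedDerivWithin 2 (fun s => u s x)
          {t : ℝ | -T < (t : EReal) ∧ (t : EReal) < T} t
        = graphLap G ω μ (u t) x + f t x)
    (hwavev : ∀ t : ℝ, -T < (t : EReal) → (t : EReal) < T → ∀ x : V,
      iteratedDerivWithin 2 (fun s => v s x)
          {t : ℝ | -T < (t : EReal) ∧ (t : EReal) < T} t
        = graphLap G ω μ (v t) x + f t x)
    (hinitu : ∀ x : V, u 0 x = g x) (hinitv : ∀ x : V, v 0 x = g x)
    (hinitu' : ∀ x : V, derivWithin (fun s => u s x)
        {t : ℝ | -T < (t : EReal) ∧ (t : EReal) < T} 0 = h x)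
    (hinitv' : ∀ x : V, derivWithin (fun s => v s x)
        {t : ℝ | -T < (t : EReal) ∧ (t : EReal) < T} 0 = h x)
    (Cu Cv : ℝ)
    (hgrowthu : ∀ t : ℝ, -T < (t : EReal) → (t : EReal) < T → ∀ x : V,
      |u t x| ≤ Cu * (G.dist x p : ℝ) ^ ((2 - α) * (G.dist x p : ℝ)))
    (hgrowthv : ∀ t : ℝ, -T < (t : EReal) → (t : EReal) < T → ∀ x : V,
      |v t x| ≤ Cv * (G.dist x p : ℝ) ^ ((2 - α) * (G.dist x p : ℝ))) :
    ∀ t : ℝ, -T < (t : EReal) → (t : EReal) < T → ∀ x : V, u t x = v t x := by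
  set S : Set ℝ := {t : ℝ | -T < (t : EReal) ∧ (t : EReal) < T} with hSdef
  have hS : IsOpen S := by
    have : S = ((↑) : ℝ → EReal) ⁻¹' (Set.Ioo (-T) T) := rfl
    rw [this]
    exact isOpen_Ioo.preimage continuous_coe_real_ereal
  have hconv : Convex ℝ S := by
    apply convex_iff_ordConnected.mpr
    constructor
    intro a ha b hb z hz
    exact ⟨lt_of_lt_of_le ha.1 (EReal.coe_le_coe_iff.2 hz.1),
      lt_of_le_of_lt (EReal.coe_le_coe_iff.2 hz.2) hb.2⟩
  have h0S : (0:ℝ) ∈ S := by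
    constructor
    · show -T < ((0:ℝ) : EReal)
      have := EReal.neg_lt_neg_iff.2 hT
      simpa using this
    · show ((0:ℝ) : EReal) < T
      simpa using hT
  have hsymmS : ∀ t : ℝ, t ∈ S → -t ∈ S := by
    intro t htS
    constructor
    · show -T < ((-t:ℝ) : EReal)
      rw [EReal.coe_neg]
      exact EReal.neg_lt_neg_iff.2 htS.2
    · show ((-t:ℝ) : EReal) < T
      rw [EReal.coe_neg]
      exact EReal.neg_lt_comm.1 htS.1
  set w : ℝ → V → ℝ := fun t x => u t x - v t x with hwdef
  set w1 : ℝ → V → ℝ := fun t x => deriv (fun s => w s x) t with hw1def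
  set C : ℝ := Cu + Cv with hCdef
  set K : ℝ := max (max D (wDeg G ω μ p)) 1 with hKdef
  have hK1 : (1:ℝ) ≤ K := le_max_right _ _
  have hKD : D ≤ K := le_trans (le_max_left _ _) (le_max_left _ _)
  have hKp : wDeg G ω μ p ≤ K := le_trans (le_max_right _ _) (le_max_left _ _)
  have hρp : ((G.dist p p : ℝ)) ^ ((2 - α) * (G.dist p p : ℝ)) = 1 := by
    simp [SimpleGraph.dist_self]
  have hCu0 : 0 ≤ Cu := by
    have h1 := hgrowthu 0 h0S.1 h0S.2 p
    rw [hρp, mul_one] at h1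
    exact (abs_nonneg _).trans h1
  have hCv0 : 0 ≤ Cv := by
    have h1 := hgrowthv 0 h0S.1 h0S.2 p
    rw [hρp, mul_one] at h1
    exact (abs_nonneg _).trans h1
  have hC : 0 ≤ C := by rw [hCdef]; linarith
  have hgrow : ∀ t ∈ S, ∀ y : V,
      |w t y| ≤ C * (G.dist y p : ℝ) ^ ((2 - α) * (G.dist y p : ℝ)) := by
    intro t htS y
    have h1 := hgrowthu t htS.1 htS.2 y
    have h2 := hgrowthv t htS.1 htS.2 y
    calc |w t y| ≤ |u t y| + |v t y| := abs_sub _ _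
      _ ≤ Cu * (G.dist y p : ℝ) ^ ((2 - α) * (G.dist y p : ℝ))
          + Cv * (G.dist y p : ℝ) ^ ((2 - α) * (G.dist y p : ℝ)) := add_le_add h1 h2
      _ = C * (G.dist y p : ℝ) ^ ((2 - α) * (G.dist y p : ℝ)) := by rw [hCdef]; ring
  have hrw : ∀ x : V, ContDiffOn ℝ 2 (fun t => w t x) S := fun x => (hregu x).sub (hregv x)
  have hd1 : ∀ x, ∀ t ∈ S, HasDerivAt (fun s => w s x) (w1 t x) t := by
    intro x t htS
    have hdiff : DifferentiableAt ℝ (fun s => w s x) t :=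
      ((hrw x).differentiableOn two_ne_zero).differentiableAt (hS.mem_nhds htS)
    exact hdiff.hasDerivAt
  have hudiff : ∀ x, ∀ t ∈ S, DifferentiableAt ℝ (fun s => u s x) t := by
    intro x t htS
    exact ((hregu x).differentiableOn two_ne_zero).differentiableAt (hS.mem_nhds htS)
  have hvdiff : ∀ x, ∀ t ∈ S, DifferentiableAt ℝ (fun s => v s x) t := by
    intro x t htS
    exact ((hregv x).differentiableOn two_ne_zero).differentiableAt (hS.mem_nhds htS)
  have hudiff2 : ∀ x, ∀ t ∈ S, DifferentiableAt ℝ (deriv (fun s => u s x)) t := by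
    intro x t htS
    have h1 : ContDiffOn ℝ 1 (deriv (fun s => u s x)) S :=
      (hregu x).deriv_of_isOpen hS (by norm_num)
    exact (h1.differentiableOn one_ne_zero).differentiableAt (hS.mem_nhds htS)
  have hvdiff2 : ∀ x, ∀ t ∈ S, DifferentiableAt ℝ (deriv (fun s => v s x)) t := by
    intro x t htS
    have h1 : ContDiffOn ℝ 1 (deriv (fun s => v s x)) S :=
      (hregv x).deriv_of_isOpen hS (by norm_num)
    exact (h1.differentiableOn one_ne_zero).differentiableAt (hS.mem_nhds htS)
  have hderw : ∀ x, ∀ t ∈ S,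
      deriv (fun s => w s x) t = deriv (fun s => u s x) t - deriv (fun s => v s x) t := by
    intro x t htS
    exact deriv_sub (hudiff x t htS) (hvdiff x t htS)
  have hd2 : ∀ x, ∀ t ∈ S, HasDerivAt (fun s => w1 s x) (graphLap G ω μ (w t) x) t := by
    intro x t htS
    have hC1 : ContDiffOn ℝ 1 (deriv (fun s => w s x)) S :=
      (hrw x).deriv_of_isOpen hS (by norm_num)
    have hdd : HasDerivAt (deriv (fun s => w s x)) (deriv (deriv (fun s => w s x)) t) t :=
      ((hC1.differentiableOn one_ne_zero).differentiableAt (hS.mem_nhds htS)).hasDerivAt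
    have hEq : deriv (fun s => w s x)
        =ᶠ[nhds t] fun s => deriv (fun z => u z x) s - deriv (fun z => v z x) s := by
      filter_upwards [hS.mem_nhds htS] with s hs
      exact hderw x s hs
    have hval : deriv (deriv (fun s => w s x)) t = graphLap G ω μ (w t) x := by
      rw [hEq.deriv_eq, deriv_fun_sub (hudiff2 x t htS) (hvdiff2 x t htS)]
      rw [← WUC_iter2 (f := fun s => u s x) hS htS, ← WUC_iter2 (f := fun s => v s x) hS htS]
      rw [hwaveu t htS.1 htS.2 x, hwavev t htS.1 htS.2 x]
      have : w t = fun y => u t y - v t y := rfl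
      rw [this, WUC_lap_sub]
      ring
    rw [← hval]
    exact hdd
  have hw0 : ∀ x, w 0 x = 0 := by
    intro x
    show u 0 x - v 0 x = 0
    rw [hinitu x, hinitv x, sub_self]
  have hw10 : ∀ x, w1 0 x = 0 := by
    intro x
    show deriv (fun s => w s x) 0 = 0
    rw [hderw x 0 h0S]
    rw [← derivWithin_of_isOpen hS h0S, ← derivWithin_of_isOpen hS h0S]
    rw [hinitu' x, hinitv' x, sub_self]
  have hWB : ∀ t ∈ S, ∀ (n : ℕ) (x : V), |(graphLap G ω μ)^[n] (w t) x| ≤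
      C * (2*K)^n * ((G.dist x p : ℝ) + n + 1) ^ (2*n + 2*(G.dist x p) + 2) := by
    intro t htS n x
    exact WUC_spatial G hconn ω μ hμ hω p D α hα0 hα2 hdeg K hKD hK1 hKp C hC (w t)
      (fun y => hgrow t htS y) n x
  have hzero : ∀ t ∈ S, ∀ x, w t x = 0 := by
    intro t htS x
    rcases le_or_gt 0 t with ht0 | ht0
    · exact WUC_mid G ω μ p hconv h0S hC hK1 w w1 hd1 hd2 hw0 hw10 hWB t htS ht0 x
    · -- time reflection
      have hd1r : ∀ y, ∀ s ∈ S, HasDerivAt (fun z => w (-z) y) (-(w1 (-s) y)) s := by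
        intro y s hsS
        have hneg : HasDerivAt (fun z : ℝ => -z) (-1) s := hasDerivAt_neg s
        have hh := (hd1 y (-s) (hsymmS s hsS)).comp s hneg
        simpa [mul_comm, Function.comp_def] using hh
      have hd2r : ∀ y, ∀ s ∈ S,
          HasDerivAt (fun z => -(w1 (-z) y)) (graphLap G ω μ (w (-s)) y) s := by
        intro y s hsS
        have hneg : HasDerivAt (fun z : ℝ => -z) (-1) s := hasDerivAt_neg s
        have hh := ((hd2 y (-s) (hsymmS s hsS)).comp s hneg).neg
        simpa [mul_comm, Function.comp_def, Pi.neg_def] using hh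
      have hmid := WUC_mid G ω μ p hconv h0S hC hK1
        (fun z y => w (-z) y) (fun z y => -(w1 (-z) y))
        hd1r hd2r (fun y => by simpa using hw0 y) (fun y => by simpa using hw10 y)
        (fun s hsS n y => by simpa using hWB (-s) (hsymmS s hsS) n y)
        (-t) (hsymmS t htS) (by linarith) x
      simpa using hmid
  intro t hT1 hT2 x
  have hts : t ∈ S := ⟨hT1, hT2⟩
  have := hzero t hts x
  exact sub_eq_zero.1 this
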